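/- arXiv:1204.5194 — 2 statements merged into one kernel-verified Lean document; each statement's English description precedes it below -/
import Mathlib

section
/- Every finite graph G satisfies ⌈log₂(L+2)⌉ ≤ td(G) ≤ L + 1, where L is the number of edges of a longest path in G and td(G) is the tree-depth of G. -/
/-- A rooted forest on the vertex type `V`, given by a parent function and a
depth (distance to the root) function; roots are their own parents. -/
structure RForest (V : Type*) where
  parent : V → V
  depth : V → ℕ
  parent_depth : ∀ v, depth v ≠ 0 → depth (parent v) = depth v - 1
  root_parent : ∀ v, depth v = 0 → parent v = v

/-- `F.Anc u v`: `u` is a proper ancestor of `v` in the rooted forest `F`. -/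
def RForest.Anc {V : Type*} (F : RForest V) (u v : V) : Prop :=
  ∃ k : ℕ, 0 < k ∧ k ≤ F.depth v ∧ F.parent^[k] v = u

/-- `InClosure G F`: `G` is a subgraph of the closure cl(F) of the rooted
forest `F`, i.e. every edge of `G` joins a vertex to one of its descendants. -/
def InClosure {V : Type*} (G : SimpleGraph V) (F : RForest V) : Prop :=
  ∀ u v : V, G.Adj u v → F.Anc u v ∨ F.Anc v u

/-- The tree-depth of `G`: one more than the least height of a rooted forest
whose closure contains `G` as a subgraph. -/
noncomputable def treedepth {V : Type*} (G : SimpleGraph V) : ℕ :=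
  1 + sInf {h : ℕ | ∃ F : RForest V, (∀ v, F.depth v ≤ h) ∧ InClosure G F}

namespace RForest

variable {V : Type*} (F : RForest V)

lemma depth_iterate (k : ℕ) (v : V) (h : k ≤ F.depth v) :
    F.depth (F.parent^[k] v) = F.depth v - k := by
  induction k with
  | zero => simp
  | succ k ih =>
    rw [Function.iterate_succ_apply']
    have hk : k ≤ F.depth v := by omega
    have h1 := ih hk
    have h2 : F.depth (F.parent^[k] v) ≠ 0 := by omega
    rw [F.parent_depth _ h2, h1]
    omega

def Desc (x y : V) : Prop :=
  F.depth x ≤ F.depth y ∧ F.parent^[F.depth y - F.depth x] y = x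

lemma desc_refl (x : V) : F.Desc x x := ⟨le_refl _, by simp⟩

lemma desc_eq {x y : V} (h : F.Desc x y) (hd : F.depth y ≤ F.depth x) : y = x := by
  have h0 : F.depth y - F.depth x = 0 := by omega
  have h2 := h.2
  rw [h0, Function.iterate_zero_apply] at h2
  exact h2

lemma desc_depth_lt {x y : V} (h : F.Desc x y) (hne : y ≠ x) :
    F.depth x < F.depth y := by
  rcases lt_or_ge (F.depth x) (F.depth y) with h' | h'
  · exact h'
  · exact absurd (F.desc_eq h h') hne

lemma desc_of_comp {x y z : V} (hxy : F.Desc x y) (hcomp : F.Anc z y ∨ F.Anc y z)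
    (hz : F.depth x ≤ F.depth z) : F.Desc x z := by
  obtain ⟨hle, hit⟩ := hxy
  rcases hcomp with ⟨k, hk0, hky, hky'⟩ | ⟨k, hk0, hkz, hkz'⟩
  · have hdz : F.depth z = F.depth y - k := by rw [← hky']; exact F.depth_iterate k y hky
    have hkle : k ≤ F.depth y - F.depth x := by omega
    refine ⟨hz, ?_⟩
    have heq : F.depth z - F.depth x = F.depth y - F.depth x - k := by omega
    rw [heq]
    calc F.parent^[F.depth y - F.depth x - k] z
        = F.parent^[F.depth y - F.depth x - k] (F.parent^[k] y) := by rw [hky']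
      _ = F.parent^[(F.depth y - F.depth x - k) + k] y :=
          (Function.iterate_add_apply _ _ _ _).symm
      _ = x := by rw [Nat.sub_add_cancel hkle]; exact hit
  · have hdy : F.depth y = F.depth z - k := by rw [← hkz']; exact F.depth_iterate k z hkz
    refine ⟨hz, ?_⟩
    have heq : F.depth z - F.depth x = (F.depth y - F.depth x) + k := by omega
    rw [heq, Function.iterate_add_apply, hkz', hit]

lemma desc_parent {v w : V} (h : F.Desc v w) (hne : w ≠ v) : F.Desc v (F.parent w) := by
  have hlt := F.desc_depth_lt h hne
  have hw0 : F.depth w ≠ 0 := by omega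
  have hdp : F.depth (F.parent w) = F.depth w - 1 := F.parent_depth w hw0
  refine ⟨by omega, ?_⟩
  have h2 := h.2
  have hm : F.depth w - F.depth v = (F.depth (F.parent w) - F.depth v) + 1 := by omega
  rw [hm, Function.iterate_succ_apply] at h2
  exact h2

lemma desc_of_parent {v w : V} (hw0 : F.depth w ≠ 0) (h : F.Desc v (F.parent w)) :
    F.Desc v w := by
  have hdp : F.depth (F.parent w) = F.depth w - 1 := F.parent_depth w hw0
  have h1 := h.1
  refine ⟨by omega, ?_⟩
  have hm : F.depth w - F.depth v = (F.depth (F.parent w) - F.depth v) + 1 := by omega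
  rw [hm, Function.iterate_succ_apply]
  exact h.2

lemma anc_of_desc {v u : V} (h : F.Desc v u) (hne : u ≠ v) : F.Anc v u := by
  have hlt := F.desc_depth_lt h hne
  exact ⟨F.depth u - F.depth v, by omega, by omega, h.2⟩

end RForest

open SimpleGraph

lemma desc_walk {V : Type*} {G : SimpleGraph V} {F : RForest V}
    (hcl : InClosure G F) (x : V) :
    ∀ {s c : V} (q : G.Walk s c), F.Desc x s →
      (∀ y ∈ q.support, F.depth x ≤ F.depth y) → ∀ y ∈ q.support, F.Desc x y := by
  intro s c q
  induction q with
  | nil =>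
    intro hs _ y hy
    rw [Walk.mem_support_nil_iff] at hy
    subst hy; exact hs
  | @cons a b c hadj q ihq =>
    intro hs hlo y hy
    have hb : F.Desc x b := by
      refine F.desc_of_comp hs ?_ ?_
      · exact (hcl a b hadj).symm
      · exact hlo b (by simp)
    rw [Walk.support_cons, List.mem_cons] at hy
    rcases hy with rfl | hy
    · exact hs
    · exact ihq hb (fun z hz => hlo z (by rw [Walk.support_cons]; exact List.mem_cons_of_mem _ hz)) y hy

lemma tree_path_bound {V : Type*} {G : SimpleGraph V} {F : RForest V}
    (hcl : InClosure G F) {h : ℕ} (hF : ∀ v, F.depth v ≤ h) :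
    ∀ (k d : ℕ), h + 1 ≤ d + k → ∀ {a b : V} (p : G.Walk a b), p.IsPath →
      (∀ x ∈ p.support, d ≤ F.depth x) → p.support.length ≤ 2 ^ k - 1 := by
  classical
  intro k
  induction k with
  | zero =>
    intro d hd a b p hp hlow
    have h1 := hlow a p.start_mem_support
    have h2 := hF a
    omega
  | succ k ih =>
    intro d hd a b p hp hlow
    obtain ⟨x, hxmem', hxmin⟩ :=
      p.support.toFinset.exists_min_image F.depth ⟨a, by simp⟩
    rw [List.mem_toFinset] at hxmem'
    have hxmin' : ∀ y ∈ p.support, F.depth x ≤ F.depth y := fun y hy =>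
      hxmin y (List.mem_toFinset.2 hy)
    set t := p.takeUntil x hxmem' with ht
    set dr := p.dropUntil x hxmem' with hdr
    have hspec : t.append dr = p := p.take_spec hxmem'
    have hmemiff : ∀ y, y ∈ p.support ↔ y ∈ t.support ∨ y ∈ dr.support := by
      intro y
      rw [← hspec, Walk.mem_support_append_iff]
    -- every vertex of p is a descendant of x
    have hdesc : ∀ y ∈ p.support, F.Desc x y := by
      intro y hy
      rcases (hmemiff y).1 hy with hyt | hyd
      · have : y ∈ t.reverse.support := by
          rw [Walk.support_reverse, List.mem_reverse]; exact hyt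
        refine desc_walk hcl x t.reverse (F.desc_refl x) ?_ y this
        intro z hz
        rw [Walk.support_reverse, List.mem_reverse] at hz
        exact hxmin' z ((hmemiff z).2 (Or.inl hz))
      · refine desc_walk hcl x dr (F.desc_refl x) ?_ y hyd
        intro z hz
        exact hxmin' z ((hmemiff z).2 (Or.inr hz))
    have hstrict : ∀ y ∈ p.support, y ≠ x → d + 1 ≤ F.depth y := by
      intro y hy hne
      have h1 := F.desc_depth_lt (hdesc y hy) hne
      have h2 := hlow x hxmem'
      omega
    -- bound for a path starting at x whose support lies in p.support
    have side : ∀ (c : V) (w : G.Walk x c), w.IsPath →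
        (∀ y ∈ w.support, y ∈ p.support) → w.support.length ≤ 2 ^ k := by
      intro c w hw hsub
      cases w with
      | nil =>
        simp only [Walk.support_nil, List.length_singleton]
        exact Nat.one_le_two_pow
      | @cons _ s _ hadj q =>
        rw [Walk.cons_isPath_iff] at hw
        have hq := ih (d + 1) (by omega) q hw.1 (fun y hy => by
          refine hstrict y (hsub y (by rw [Walk.support_cons]; exact List.mem_cons_of_mem _ hy)) ?_
          rintro rfl
          exact hw.2 hy)
        rw [Walk.support_cons, List.length_cons]
        have h1 : (1:ℕ) ≤ 2 ^ k := Nat.one_le_two_pow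
        omega
    have hbt : t.support.length ≤ 2 ^ k := by
      have := side a t.reverse (hp.takeUntil hxmem').reverse (fun y hy => by
        rw [Walk.support_reverse, List.mem_reverse] at hy
        exact (hmemiff y).2 (Or.inl hy))
      rwa [Walk.support_reverse, List.length_reverse] at this
    have hbd : dr.support.length ≤ 2 ^ k :=
      side b dr (hp.dropUntil hxmem') (fun y hy => (hmemiff y).2 (Or.inr hy))
    have hdr1 : 1 ≤ dr.support.length := by
      rw [Walk.length_support]; omega
    have hcount : p.support.length = t.support.length + dr.support.length - 1 := by
      rw [← hspec, Walk.support_append, List.length_append, List.length_tail]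
      omega
    have hpow : 2 ^ (k + 1) = 2 ^ k + 2 ^ k := by rw [pow_succ]; omega
    omega

section Upper

variable {V : Type*} {G : SimpleGraph V}

/-- A rooted forest whose parent edges are edges of `G`. -/
def GFor (G : SimpleGraph V) (F : RForest V) : Prop :=
  ∀ v, F.depth v ≠ 0 → G.Adj (F.parent v) v

lemma gfor_walk {F : RForest V} (hF : GFor G F) :
    ∀ (n : ℕ) (v : V), F.depth v = n →
      ∃ (r : V) (w : G.Walk v r), w.IsPath ∧ w.length = n ∧
        ∀ x ∈ w.support, F.depth x ≤ n := by
  intro n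
  induction n with
  | zero =>
    intro v hv
    exact ⟨v, Walk.nil, Walk.IsPath.nil, rfl, by simp [hv]⟩
  | succ n ih =>
    intro v hv
    have h0 : F.depth v ≠ 0 := by omega
    have hadj := hF v h0
    have hpd : F.depth (F.parent v) = n := by rw [F.parent_depth v h0]; omega
    obtain ⟨r, w, hw, hlen, hsup⟩ := ih (F.parent v) hpd
    refine ⟨r, Walk.cons hadj.symm w, ?_, ?_, ?_⟩
    · rw [Walk.cons_isPath_iff]
      refine ⟨hw, fun hmem => ?_⟩
      have := hsup v hmem
      omega
    · rw [Walk.length_cons, hlen]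
    · intro x hx
      rw [Walk.support_cons, List.mem_cons] at hx
      rcases hx with rfl | hx
      · omega
      · have := hsup x hx; omega

lemma improve [Fintype V] {F : RForest V} (hP : GFor G F) {u v : V} (hadj : G.Adj u v)
    (hvu : F.depth v ≤ F.depth u) (h1 : ¬F.Anc u v) (h2 : ¬F.Anc v u) :
    ∃ F' : RForest V, GFor G F' ∧ ∑ w, F.depth w < ∑ w, F'.depth w := by
  classical
  set Δ := F.depth u + 1 - F.depth v with hΔdef
  have hΔ : 1 ≤ Δ := by omega
  have hndu : ¬F.Desc v u := by
    intro hd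
    by_cases hne : u = v
    · exact hadj.ne hne
    · exact h2 (F.anc_of_desc hd hne)
  refine ⟨⟨fun w => if w = v then u else F.parent w,
          fun w => if F.Desc v w then F.depth w + Δ else F.depth w, ?_, ?_⟩, ?_, ?_⟩
  · -- parent_depth
    intro w hw0
    try dsimp only at hw0 ⊢
    by_cases hwv : w = v
    · subst hwv
      rw [if_pos rfl, if_pos (F.desc_refl w), if_neg hndu]
      omega
    · rw [if_neg hwv]
      by_cases hd : F.Desc v w
      · have hlt := F.desc_depth_lt hd hwv
        have hw0' : F.depth w ≠ 0 := by omega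
        have hdp := F.parent_depth w hw0'
        have hdp' : F.Desc v (F.parent w) := F.desc_parent hd hwv
        rw [if_pos hd, if_pos hdp']
        omega
      · rw [if_neg hd] at hw0 ⊢
        have hnp : ¬F.Desc v (F.parent w) := fun hc => hd (F.desc_of_parent hw0 hc)
        rw [if_neg hnp]
        exact F.parent_depth w hw0
  · -- root_parent
    intro w hw0
    try dsimp only at hw0 ⊢
    by_cases hd : F.Desc v w
    · rw [if_pos hd] at hw0; omega
    · rw [if_neg hd] at hw0
      have hwv : w ≠ v := fun h => hd (h ▸ F.desc_refl v)
      rw [if_neg hwv]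
      exact F.root_parent w hw0
  · -- GFor
    intro w hw0
    dsimp only at hw0 ⊢
    by_cases hwv : w = v
    · subst hwv
      rw [if_pos rfl]
      exact hadj
    · rw [if_neg hwv]
      refine hP w ?_
      by_cases hd : F.Desc v w
      · have := F.desc_depth_lt hd hwv; omega
      · rw [if_neg hd] at hw0; exact hw0
  · -- sum increases
    refine Finset.sum_lt_sum (fun i _ => ?_) ⟨v, Finset.mem_univ v, ?_⟩
    · dsimp only
      by_cases hd : F.Desc v i
      · rw [if_pos hd]; omega
      · rw [if_neg hd]
    · dsimp only
      rw [if_pos (F.desc_refl v)]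
      omega

lemma exists_good_forest [Fintype V] {L : ℕ}
    (hub : ∀ (a b : V) (q : G.Walk a b), q.IsPath → q.length ≤ L) :
    ∃ F : RForest V, (∀ v, F.depth v ≤ L) ∧ InClosure G F := by
  classical
  have hdep : ∀ F : RForest V, GFor G F → ∀ v, F.depth v ≤ L := by
    intro F hF v
    obtain ⟨r, w, hw, hlen, _⟩ := gfor_walk hF (F.depth v) v rfl
    have := hub v r w hw
    omega
  set S : Set ℕ := (fun F : RForest V => ∑ w, F.depth w) '' {F | GFor G F} with hS
  have hF0 : GFor G ⟨id, fun _ => 0, fun v h => absurd rfl h, fun _ _ => rfl⟩ :=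
    fun v h => absurd rfl h
  have hSne : S.Nonempty := ⟨_, ⟨_, hF0, rfl⟩⟩
  have hbdd : BddAbove S := by
    refine ⟨Fintype.card V * L, ?_⟩
    rintro n ⟨F, hF, rfl⟩
    calc ∑ w, F.depth w ≤ ∑ _w : V, L := Finset.sum_le_sum (fun i _ => hdep F hF i)
      _ = Fintype.card V * L := by rw [Finset.sum_const, Finset.card_univ, smul_eq_mul]
  obtain ⟨F, hGF, hsum⟩ := Nat.sSup_mem hSne hbdd
  have hmax : ∀ F' : RForest V, GFor G F' → ∑ w, F'.depth w ≤ ∑ w, F.depth w := by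
    intro F' h'
    have h2 : ∑ w, F'.depth w ≤ sSup S := le_csSup hbdd ⟨F', h', rfl⟩
    simpa [← hsum] using h2
  refine ⟨F, hdep F hGF, ?_⟩
  intro u v hadj
  by_contra hnc
  push_neg at hnc
  rcases le_total (F.depth v) (F.depth u) with hle | hle
  · obtain ⟨F', hF', hlt⟩ := improve hGF hadj hle hnc.1 hnc.2
    exact absurd (hmax F' hF') (not_le.2 hlt)
  · obtain ⟨F', hF', hlt⟩ := improve hGF hadj.symm hle hnc.2 hnc.1
    exact absurd (hmax F' hF') (not_le.2 hlt)

end Upper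

/-- For a finite graph G with longest path of length L (number of edges):
⌈log₂(L+2)⌉ ≤ td(G) ≤ L + 1. -/
theorem stmt13 {V : Type*} [Fintype V] (G : SimpleGraph V) (L : ℕ)
    (hL : IsGreatest {n : ℕ | ∃ (u v : V) (w : G.Walk u v), w.IsPath ∧ w.length = n} L) :
    Nat.clog 2 (L + 2) ≤ treedepth G ∧ treedepth G ≤ L + 1 := by
  classical
  obtain ⟨hmem, hub⟩ := hL
  obtain ⟨u, v, w, hw, hwl⟩ := hmem
  have hub' : ∀ (a b : V) (q : G.Walk a b), q.IsPath → q.length ≤ L :=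
    fun a b q hq => hub ⟨a, b, q, hq, rfl⟩
  obtain ⟨F₀, hF₀d, hF₀c⟩ := exists_good_forest hub'
  set S : Set ℕ := {h : ℕ | ∃ F : RForest V, (∀ v, F.depth v ≤ h) ∧ InClosure G F} with hS
  have htd : treedepth G = 1 + sInf S := rfl
  have hLS : L ∈ S := ⟨F₀, hF₀d, hF₀c⟩
  obtain ⟨F, hFd, hFc⟩ := Nat.sInf_mem (⟨L, hLS⟩ : S.Nonempty)
  constructor
  · have hkey := tree_path_bound hFc hFd (sInf S + 1) 0 (by omega) w hw
      (fun x _ => Nat.zero_le _)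
    rw [SimpleGraph.Walk.length_support, hwl] at hkey
    have hone : (1:ℕ) ≤ 2 ^ (sInf S + 1) := Nat.one_le_two_pow
    have h2 : L + 2 ≤ 2 ^ (sInf S + 1) := by omega
    have hclog := (Nat.clog_le_iff_le_pow (by norm_num)).2 h2
    omega
  · have := Nat.sInf_le hLS
    omega
end

section
/- If G is a subgraph of the closure cl(F) of a rooted forest F of height h, then G contains no path with more than 2^{h+1} − 2 edges; equivalently, a path on n vertices has tree-depth at least ⌈log₂(n+1)⌉. -/
section Aux

variable {V : Type*}

lemma RForest.depth_iterate_s14 (F : RForest V) (v : V) :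
    ∀ k, k ≤ F.depth v → F.depth (F.parent^[k] v) = F.depth v - k := by
  intro k
  induction k with
  | zero => simp
  | succ k ih =>
    intro hk
    rw [Function.iterate_succ_apply', F.parent_depth _ (by rw [ih (by omega)]; omega),
      ih (by omega)]
    omega

lemma RForest.Anc.depth_lt {F : RForest V} {u v : V} (h : F.Anc u v) :
    F.depth u < F.depth v := by
  obtain ⟨k, hk0, hkd, hpar⟩ := h
  have := F.depth_iterate_s14 v k hkd
  rw [hpar] at this
  omega

/-- ancestor of `x` at depth `d` (assuming `d ≤ depth x`). -/
noncomputable def RForest.levelAnc (F : RForest V) (d : ℕ) (x : V) : V :=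
  F.parent^[F.depth x - d] x

lemma RForest.levelAnc_self (F : RForest V) {d : ℕ} {x : V} (hx : F.depth x = d) :
    F.levelAnc d x = x := by
  simp [RForest.levelAnc, hx]

lemma RForest.levelAnc_eq_of_anc (F : RForest V) {d : ℕ} {u v : V} (h : F.Anc u v)
    (hd : d ≤ F.depth u) : F.levelAnc d u = F.levelAnc d v := by
  obtain ⟨k, hk0, hkd, hpar⟩ := h
  have hdu : F.depth u = F.depth v - k := by
    have := F.depth_iterate_s14 v k hkd
    rw [hpar] at this
    omega
  have hd2 : F.depth (F.parent^[k] v) = F.depth v - k := F.depth_iterate_s14 v k hkd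
  unfold RForest.levelAnc
  rw [← hpar, ← Function.iterate_add_apply]
  congr 1
  omega

lemma levelAnc_const {G : SimpleGraph V} {F : RForest V} (hsub : InClosure G F)
    {d : ℕ} : ∀ {u v : V} (w : G.Walk u v), (∀ x ∈ w.support, d ≤ F.depth x) →
    ∀ x ∈ w.support, F.levelAnc d x = F.levelAnc d u := by
  intro u v w
  induction w with
  | nil =>
    intro _ x hx
    simp only [SimpleGraph.Walk.support_nil, List.mem_singleton] at hx
    rw [hx]
  | @cons a b c hadj w ih =>
    intro hd x hx
    have hda : d ≤ F.depth a := hd a (by simp)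
    have hdb : d ≤ F.depth b := hd b (by simp)
    have hab : F.levelAnc d b = F.levelAnc d a := by
      rcases hsub a b hadj with h | h
      · exact (F.levelAnc_eq_of_anc h hda).symm
      · exact F.levelAnc_eq_of_anc h hdb
    rw [SimpleGraph.Walk.support_cons, List.mem_cons] at hx
    rcases hx with rfl | hx
    · rfl
    · rw [ih (fun y hy => hd y (by simp [hy])) x hx, hab]

/-- Key lemma: a path whose vertices have depths in `[d, d+n]` has length at
most `2^(n+1) - 2`. -/
lemma key_lemma {G : SimpleGraph V} {F : RForest V} (hsub : InClosure G F) :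
    ∀ (n d : ℕ) {u v : V} (w : G.Walk u v), w.IsPath →
      (∀ x ∈ w.support, d ≤ F.depth x ∧ F.depth x ≤ d + n) →
      w.length ≤ 2 ^ (n + 1) - 2 := by
  intro n
  induction n with
  | zero =>
    intro d u v w _ hdep
    cases w with
    | nil => simp
    | @cons _ b _ hadj w' =>
      exfalso
      have hu := hdep u (by simp)
      have hb := hdep b (by simp)
      rcases hsub u b hadj with h | h
      · have := h.depth_lt; omega
      · have := h.depth_lt; omega
  | succ n ih =>
    intro d u v w hw hdep
    classical
    by_cases hall : ∀ x ∈ w.support, d + 1 ≤ F.depth x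
    · have := ih (d + 1) w hw (fun x hx => ⟨hall x hx, by have := (hdep x hx).2; omega⟩)
      have h2 : 2 ^ (n + 1) ≤ 2 ^ (n + 2) := Nat.pow_le_pow_right (by norm_num) (by omega)
      omega
    · push_neg at hall
      obtain ⟨v₀, hv₀mem, hv₀d⟩ := hall
      have hv₀ : F.depth v₀ = d := by
        have := (hdep v₀ hv₀mem).1; omega
      -- uniqueness of the depth-d vertex on the walk
      have huniq : ∀ x ∈ w.support, F.depth x = d → x = v₀ := by
        intro x hx hxd
        have hc := levelAnc_const hsub w (fun y hy => (hdep y hy).1)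
        have h1 := hc x hx
        have h2 := hc v₀ hv₀mem
        rw [F.levelAnc_self hxd] at h1
        rw [F.levelAnc_self hv₀] at h2
        rw [h1, ← h2]
      -- any path starting at v₀ with support inside w's support is short
      have tail_bound : ∀ (z : V) (r : G.Walk v₀ z), r.IsPath →
          (∀ x ∈ r.support, x ∈ w.support) → r.length ≤ 2 ^ (n + 1) - 1 := by
        intro z r hr hrsub
        cases r with
        | nil => simp
        | @cons _ b _ hadj r' =>
          rw [SimpleGraph.Walk.cons_isPath_iff] at hr
          have hb : r'.length ≤ 2 ^ (n + 1) - 2 := by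
            refine ih (d + 1) r' hr.1 (fun x hx => ?_)
            have hxw : x ∈ w.support := hrsub x (by simp [hx])
            have h1 := (hdep x hxw).1
            have h2 := (hdep x hxw).2
            have hne : F.depth x ≠ d := by
              intro hxd
              exact hr.2 (huniq x hxw hxd ▸ hx)
            exact ⟨by omega, by omega⟩
          have h1 : 1 ≤ 2 ^ (n + 1) := Nat.one_le_two_pow
          simp only [SimpleGraph.Walk.length_cons]
          omega
      set p := w.takeUntil v₀ hv₀mem with hp
      set q := w.dropUntil v₀ hv₀mem with hq
      have hlen : p.length + q.length = w.length := by
        have := congrArg SimpleGraph.Walk.length (w.take_spec hv₀mem)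
        rwa [SimpleGraph.Walk.length_append] at this
      have hqb : q.length ≤ 2 ^ (n + 1) - 1 :=
        tail_bound v q (hw.dropUntil hv₀mem)
          (fun x hx => SimpleGraph.Walk.support_dropUntil_subset w hv₀mem hx)
      have hpb : p.length ≤ 2 ^ (n + 1) - 1 := by
        have := tail_bound u p.reverse
          ((SimpleGraph.Walk.isPath_reverse_iff p).mpr (hw.takeUntil hv₀mem))
          (fun x hx => by
            rw [SimpleGraph.Walk.support_reverse, List.mem_reverse] at hx
            exact SimpleGraph.Walk.support_takeUntil_subset w hv₀mem hx)
        rwa [SimpleGraph.Walk.length_reverse] at this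
      have h2 : 2 ^ (n + 2) = 2 * 2 ^ (n + 1) := by ring
      have h1 : 1 ≤ 2 ^ (n + 1) := Nat.one_le_two_pow
      omega

/-- The standard rooted "path" forest on `Fin n`. -/
def pathForest (n : ℕ) : RForest (Fin n) where
  parent v := ⟨v.val - 1, lt_of_le_of_lt (by omega) v.isLt⟩
  depth v := v.val
  parent_depth v h := rfl
  root_parent v h := Fin.ext (by simp [h])

lemma pathForest_inClosure (n : ℕ) :
    InClosure (SimpleGraph.pathGraph n) (pathForest n) := by
  intro u v huv
  rw [SimpleGraph.pathGraph_adj] at huv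
  rcases huv with h | h
  · left
    exact ⟨1, Nat.one_pos, by simp [pathForest]; omega,
      by simp [pathForest]; exact Fin.ext (by simp; omega)⟩
  · right
    exact ⟨1, Nat.one_pos, by simp [pathForest]; omega,
      by simp [pathForest]; exact Fin.ext (by simp; omega)⟩

/-- `pathGraph n` contains a Hamiltonian-type path from any vertex up to the
last vertex. -/
lemma pathGraph_ham (n : ℕ) : ∀ (k : ℕ) (i : Fin n) (_hk : i.val + k + 1 = n),
    ∃ w : (SimpleGraph.pathGraph n).Walk i ⟨n - 1, by omega⟩,
      w.length = k ∧ w.IsPath ∧ ∀ x ∈ w.support, i ≤ x := by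
  intro k
  induction k with
  | zero =>
    intro i hi
    have hieq : i = ⟨n - 1, by omega⟩ := Fin.ext (by simp only [Fin.val_mk]; omega)
    refine ⟨SimpleGraph.Walk.nil.copy hieq.symm rfl, by simp, by simp, ?_⟩
    intro x hx
    simp only [SimpleGraph.Walk.support_copy, SimpleGraph.Walk.support_nil,
      List.mem_singleton] at hx
    subst hx
    exact le_of_eq hieq
  | succ k ih =>
    intro i hi
    set i' : Fin n := ⟨i.val + 1, by omega⟩ with hi'
    have hadj : (SimpleGraph.pathGraph n).Adj i i' := by
      rw [SimpleGraph.pathGraph_adj]; left; rfl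
    obtain ⟨w', hw'len, hw'path, hw'ge⟩ := ih i' (by simp [hi']; omega)
    have hlt : i < i' := by rw [Fin.lt_def]; simp [hi']
    refine ⟨SimpleGraph.Walk.cons hadj w', by simp [hw'len], ?_, ?_⟩
    · rw [SimpleGraph.Walk.cons_isPath_iff]
      exact ⟨hw'path, fun hmem => absurd (hw'ge i hmem) (by simp [not_le, hlt])⟩
    · intro x hx
      rw [SimpleGraph.Walk.support_cons, List.mem_cons] at hx
      rcases hx with rfl | hx
      · exact le_refl x
      · exact le_of_lt (lt_of_lt_of_le hlt (hw'ge x hx))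

end Aux

/-- If G is a subgraph of the closure of a rooted forest of height ≤ h, then G
has no path with more than 2^{h+1} − 2 edges; equivalently, the path on n
vertices has tree-depth at least ⌈log₂(n+1)⌉. -/
theorem stmt14 {V : Type*} (G : SimpleGraph V) (F : RForest V) (h : ℕ)
    (hh : ∀ v, F.depth v ≤ h) (hsub : InClosure G F) :
    (∀ (u v : V) (w : G.Walk u v), w.IsPath → w.length ≤ 2 ^ (h + 1) - 2) ∧
    ∀ n : ℕ, Nat.clog 2 (n + 1) ≤ treedepth (SimpleGraph.pathGraph n) := by
  constructor
  · intro u v w hw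
    exact key_lemma hsub h 0 w hw (fun x _ => ⟨Nat.zero_le _, by simpa using hh x⟩)
  · intro n
    rcases Nat.eq_zero_or_pos n with rfl | hn
    · simp [Nat.clog_one_right]
    · set S : Set ℕ :=
        {h : ℕ | ∃ F : RForest (Fin n), (∀ v, F.depth v ≤ h) ∧
          InClosure (SimpleGraph.pathGraph n) F} with hS
      have hSne : S.Nonempty :=
        ⟨n, pathForest n, fun v => le_of_lt v.isLt, pathForest_inClosure n⟩
      obtain ⟨F', hF', hC⟩ := Nat.sInf_mem hSne
      set m := sInf S with hm
      obtain ⟨w, hwlen, hwpath, -⟩ := pathGraph_ham n (n - 1) ⟨0, hn⟩ (by simp only [Fin.val_mk]; omega)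
      have hb : w.length ≤ 2 ^ (m + 1) - 2 :=
        key_lemma hC m 0 w hwpath (fun x _ => ⟨Nat.zero_le _, by simpa using hF' x⟩)
      have h2 : 2 ≤ 2 ^ (m + 1) := by
        calc 2 = 2 ^ 1 := rfl
        _ ≤ 2 ^ (m + 1) := Nat.pow_le_pow_right (by norm_num) (by omega)
      have hle : n + 1 ≤ 2 ^ (m + 1) := by omega
      have := (Nat.clog_le_iff_le_pow one_lt_two).mpr hle
      rw [treedepth, ← hS, ← hm]
      omega
end
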